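/- Suppose for each k the dual variable satisfies y_k = −∇g_k(w_k) for some point w_k ∈ E, where each g_k is differentiable with L_k-Lipschitz gradient. Then for any points x⁺ ∈ E and x_k⁺ ∈ E (k = 1,…,K): L({x_k⁺}, x⁺; y) ≥ f(x⁺) + Σ_{k=1}^K [ ((ρ_k − 4L_k)/2)‖x_k⁺ − x⁺‖² − (L_k/2)‖w_k − x⁺‖² ], where f(x) := Σ_{k=1}^K g_k(x) + h(x). -/

import Mathlib

open RealInnerProductSpace

/-- Derivative of `g` along the line `t ↦ a + t • v`. -/
lemma line_hasDerivAt {E : Type*} [NormedAddCommGroup E] [InnerProductSpace ℝ E] [CompleteSpace E]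
    {g : E → ℝ} (hdiff : Differentiable ℝ g) (a v : E) (t : ℝ) :
    HasDerivAt (fun s : ℝ => g (a + s • v)) ⟪gradient g (a + t • v), v⟫ t := by
  have hline : HasDerivAt (fun s : ℝ => a + s • v) v t := by
    simpa using ((hasDerivAt_id t).smul_const v).const_add a
  have hg : HasFDerivAt g (InnerProductSpace.toDual ℝ E (gradient g (a + t • v))) (a + t • v) :=
    (hdiff (a + t • v)).hasGradientAt
  simpa [Function.comp_def] using hg.comp_hasDerivAt t hline

/-- Descent lemma: a function with `L`-Lipschitz gradient satisfies the quadratic upper bound. -/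
lemma descent_lemma {E : Type*} [NormedAddCommGroup E] [InnerProductSpace ℝ E] [CompleteSpace E]
    {g : E → ℝ} {L : ℝ} (hL : 0 ≤ L) (hdiff : Differentiable ℝ g)
    (hlip : ∀ u v : E, ‖gradient g u - gradient g v‖ ≤ L * ‖u - v‖) (a b : E) :
    g b ≤ g a + ⟪gradient g a, b - a⟫ + L / 2 * ‖b - a‖ ^ 2 := by
  set v := b - a with hv
  set F : ℝ → ℝ := fun t =>
    g a + t * ⟪gradient g a, v⟫ + L / 2 * ‖v‖ ^ 2 * t ^ 2 - g (a + t • v) with hF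
  have hFd : ∀ t : ℝ, HasDerivAt F
      (⟪gradient g a, v⟫ + L * ‖v‖ ^ 2 * t - ⟪gradient g (a + t • v), v⟫) t := by
    intro t
    have h1 : HasDerivAt (fun t : ℝ => g a + t * ⟪gradient g a, v⟫ + L / 2 * ‖v‖ ^ 2 * t ^ 2)
        (⟪gradient g a, v⟫ + L * ‖v‖ ^ 2 * t) t := by
      have := (((hasDerivAt_id t).mul_const ⟪gradient g a, v⟫).const_add (g a)).add
        (((hasDerivAt_pow 2 t)).const_mul (L / 2 * ‖v‖ ^ 2))
      refine this.congr_deriv ?_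
      norm_num
      ring
    exact h1.sub (line_hasDerivAt hdiff a v t)
  have hmono : MonotoneOn F (Set.Icc (0 : ℝ) 1) := by
    apply monotoneOn_of_deriv_nonneg (convex_Icc 0 1)
    · intro t _
      exact (hFd t).continuousAt.continuousWithinAt
    · intro t _
      exact (hFd t).differentiableAt.differentiableWithinAt
    · intro t ht
      rw [(hFd t).deriv]
      have ht' : t ∈ Set.Ioo (0 : ℝ) 1 := by
        rwa [interior_Icc] at ht
      have hinner : ⟪gradient g (a + t • v) - gradient g a, v⟫ ≤ L * t * ‖v‖ ^ 2 := by
        calc ⟪gradient g (a + t • v) - gradient g a, v⟫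
            ≤ ‖gradient g (a + t • v) - gradient g a‖ * ‖v‖ := real_inner_le_norm _ _
          _ ≤ (L * ‖(a + t • v) - a‖) * ‖v‖ :=
              mul_le_mul_of_nonneg_right (hlip _ _) (norm_nonneg _)
          _ = L * t * ‖v‖ ^ 2 := by
              rw [add_sub_cancel_left, norm_smul, Real.norm_eq_abs,
                abs_of_nonneg ht'.1.le]
              ring
      have := hinner
      rw [inner_sub_left] at this
      linarith
  have h01 : F 0 ≤ F 1 := hmono (by norm_num) (by norm_num) (by norm_num)
  have h0 : F 0 = g a - g a := by simp [hF]
  have h1 : F 1 = g a + ⟪gradient g a, v⟫ + L / 2 * ‖v‖ ^ 2 - g b := by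
    simp [hF, hv]
  rw [h0, h1] at h01
  linarith

/-- The augmented Lagrangian of the consensus problem. -/
noncomputable def augL {E : Type*} [NormedAddCommGroup E] [InnerProductSpace ℝ E]
    {K : ℕ} (g : Fin K → E → ℝ) (h : E → ℝ) (ρ : Fin K → ℝ)
    (xk : Fin K → E) (x : E) (y : Fin K → E) : ℝ :=
  (∑ k, g k (xk k)) + h x + (∑ k, ⟪y k, xk k - x⟫) + ∑ k, ρ k / 2 * ‖xk k - x‖ ^ 2

/-- Chain of inequalities (32) in the proof of Lemma 3.4: if the dual variables
satisfy `y_k = −∇g_k(w_k)`, then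
`L({x_k⁺}, x⁺; y) ≥ f(x⁺) + ∑_k [((ρ_k − 4L_k)/2)‖x_k⁺ − x⁺‖² − (L_k/2)‖w_k − x⁺‖²]`. -/
theorem stmt_9 {E : Type*} [NormedAddCommGroup E] [InnerProductSpace ℝ E] [CompleteSpace E]
    {K : ℕ} (g : Fin K → E → ℝ) (h : E → ℝ) (L ρ : Fin K → ℝ)
    (hL : ∀ k, 0 < L k) (hρ : ∀ k, 0 < ρ k)
    (hdiff : ∀ k, Differentiable ℝ (g k))
    (hlip : ∀ k, ∀ u v : E, ‖gradient (g k) u - gradient (g k) v‖ ≤ L k * ‖u - v‖)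
    (hh : ConvexOn ℝ Set.univ h)
    (w : Fin K → E) (y : Fin K → E)
    (hy : ∀ k, y k = -gradient (g k) (w k))
    (xp : E) (xkp : Fin K → E) :
    augL g h ρ xkp xp y
      ≥ ((∑ k, g k xp) + h xp)
        + ∑ k, ((ρ k - 4 * L k) / 2 * ‖xkp k - xp‖ ^ 2 - L k / 2 * ‖w k - xp‖ ^ 2) := by
  have key : ∀ k, g k xp + ((ρ k - 4 * L k) / 2 * ‖xkp k - xp‖ ^ 2
      - L k / 2 * ‖w k - xp‖ ^ 2)
      ≤ g k (xkp k) + ⟪y k, xkp k - xp⟫ + ρ k / 2 * ‖xkp k - xp‖ ^ 2 := by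
    intro k
    set d := xkp k - xp with hd
    have hdesc := descent_lemma (hL k).le (hdiff k) (hlip k) (xkp k) xp
    have hinner : ⟪gradient (g k) (w k) - gradient (g k) (xkp k), d⟫
        ≤ L k * ‖w k - xkp k‖ * ‖d‖ := by
      calc ⟪gradient (g k) (w k) - gradient (g k) (xkp k), d⟫
          ≤ ‖gradient (g k) (w k) - gradient (g k) (xkp k)‖ * ‖d‖ := real_inner_le_norm _ _
        _ ≤ L k * ‖w k - xkp k‖ * ‖d‖ :=
            mul_le_mul_of_nonneg_right (hlip k _ _) (norm_nonneg _)
    have htri : ‖w k - xkp k‖ ≤ ‖w k - xp‖ + ‖d‖ := by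
      calc ‖w k - xkp k‖ = ‖(w k - xp) + -d‖ := by rw [hd]; congr 1; abel
        _ ≤ ‖w k - xp‖ + ‖-d‖ := norm_add_le _ _
        _ = ‖w k - xp‖ + ‖d‖ := by rw [norm_neg]
    have hyk : ⟪y k, d⟫ = -⟪gradient (g k) (w k), d⟫ := by
      rw [hy k, inner_neg_left]
    have hxp : xp - xkp k = -d := by rw [hd]; abel
    rw [hxp, inner_neg_right, norm_neg] at hdesc
    have hsum : ⟪gradient (g k) (w k) - gradient (g k) (xkp k), d⟫
        = ⟪gradient (g k) (w k), d⟫ - ⟪gradient (g k) (xkp k), d⟫ := inner_sub_left _ _ _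
    have hmulub : L k * ‖w k - xkp k‖ * ‖d‖ ≤ L k * (‖w k - xp‖ + ‖d‖) * ‖d‖ := by
      gcongr
      exact (hL k).le
    have hamgm : ‖w k - xp‖ * ‖d‖ ≤ (‖w k - xp‖ ^ 2 + ‖d‖ ^ 2) / 2 := by
      nlinarith [sq_nonneg (‖w k - xp‖ - ‖d‖)]
    have hLk := hL k
    rw [hyk]
    nlinarith [hinner, htri, hmulub]
  calc ((∑ k, g k xp) + h xp)
        + ∑ k, ((ρ k - 4 * L k) / 2 * ‖xkp k - xp‖ ^ 2 - L k / 2 * ‖w k - xp‖ ^ 2)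
      = (∑ k, (g k xp + ((ρ k - 4 * L k) / 2 * ‖xkp k - xp‖ ^ 2
          - L k / 2 * ‖w k - xp‖ ^ 2))) + h xp := by
        rw [Finset.sum_add_distrib]; ring
    _ ≤ (∑ k, (g k (xkp k) + ⟪y k, xkp k - xp⟫ + ρ k / 2 * ‖xkp k - xp‖ ^ 2)) + h xp :=
        add_le_add_left (Finset.sum_le_sum fun k _ => key k) _
    _ = augL g h ρ xkp xp y := by
        simp only [augL, Finset.sum_add_distrib]; ring
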